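/- Define λₙ = 2cos(π/n) - 1 and C_λ = [[1,2],[(λ-1)/2, λ]] ∈ SL₂(ℝ). Then C_{λₙ} has trace 2cos(π/n), and (C_{λₙ})^{2n} = I; in particular the group ⟨C_{λₙ}, B₂⟩ has a relator consisting of a single syllable, while C₁ = A₂ and ⟨A₂, B₂⟩ is free of rank 2. -/

import Mathlib

/-- The matrix `A_λ = [[1,λ],[0,1]]` in `SL₂(ℝ)`. -/
def AmatR (lam : ℝ) : Matrix.SpecialLinearGroup (Fin 2) ℝ :=
  ⟨!![1, lam; 0, 1], by simp [Matrix.det_fin_two_of]⟩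

/-- The matrix `B_μ = [[1,0],[μ,1]]` in `SL₂(ℝ)`. -/
def BmatR (mu : ℝ) : Matrix.SpecialLinearGroup (Fin 2) ℝ :=
  ⟨!![1, 0; mu, 1], by simp [Matrix.det_fin_two_of]⟩

/-- The matrix `C_λ = [[1,2],[(λ-1)/2, λ]]` in `SL₂(ℝ)`. -/
noncomputable def CmatR (lam : ℝ) : Matrix.SpecialLinearGroup (Fin 2) ℝ :=
  ⟨!![1, 2; (lam - 1) / 2, lam], by simp [Matrix.det_fin_two_of]; ring⟩

/- ### Auxiliary material -/

abbrev SL2R := Matrix.SpecialLinearGroup (Fin 2) ℝ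

section PowerFormula

/-- Chebyshev-type power formula for a 2×2 matrix satisfying its characteristic
equation with trace `2 cos θ` and determinant 1. -/
lemma pow_formula (θ : ℝ) (hs : Real.sin θ ≠ 0) (M : Matrix (Fin 2) (Fin 2) ℝ)
    (hM : M * M = (2 * Real.cos θ) • M - 1) :
    ∀ k : ℕ, M ^ (k + 1) =
      (Real.sin ((k + 1) * θ) / Real.sin θ) • M - (Real.sin (k * θ) / Real.sin θ) • 1 := by
  intro k
  induction k with
  | zero => simp [div_self hs]
  | succ k ih =>
    rw [pow_succ, ih, sub_mul, smul_mul_assoc, smul_mul_assoc, hM, one_mul]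
    rw [smul_sub, smul_smul]
    have h1 : Real.sin (((k:ℝ) + 1 + 1) * θ) =
        2 * Real.cos θ * Real.sin (((k:ℝ) + 1) * θ) - Real.sin ((k:ℝ) * θ) := by
      rw [show ((k:ℝ) + 1 + 1) * θ = ((k:ℝ) + 1) * θ + θ by ring, Real.sin_add,
        show ((k:ℝ)) * θ = ((k:ℝ) + 1) * θ - θ by ring, Real.sin_sub]
      ring
    push_cast
    rw [h1]
    ext i j
    simp [Matrix.sub_apply, Matrix.smul_apply]
    ring

lemma C_pow (n : ℕ) (hn : 2 ≤ n) :
    (CmatR (2 * Real.cos (Real.pi / n) - 1)) ^ (2 * n) = 1 := by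
  set θ := Real.pi / n with hθ
  have hn0 : (n : ℝ) ≠ 0 := by positivity
  have hθpos : 0 < θ := by positivity
  have hθlt : θ < Real.pi := by
    rw [hθ]
    exact div_lt_self Real.pi_pos (by exact_mod_cast hn.trans_lt' one_lt_two)
  have hs : Real.sin θ ≠ 0 := ne_of_gt (Real.sin_pos_of_pos_of_lt_pi hθpos hθlt)
  set M := (CmatR (2 * Real.cos θ - 1)).1 with hMdef
  have hM : M * M = (2 * Real.cos θ) • M - 1 := by
    rw [hMdef]
    ext i j
    fin_cases i <;> fin_cases j <;>
      simp [CmatR, Matrix.mul_apply, Fin.sum_univ_succ, Matrix.smul_apply, Matrix.one_apply] <;>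
      ring
  have key : M ^ (2 * n) = 1 := by
    have h2n : 2 * n = (2 * n - 1) + 1 := by omega
    rw [h2n, pow_formula θ hs M hM (2 * n - 1)]
    have e1 : ((2 * n - 1 : ℕ) : ℝ) + 1 = 2 * n := by
      have : (1:ℕ) ≤ 2 * n := by omega
      push_cast [this]
      ring
    have e2 : ((2 * n - 1 : ℕ) : ℝ) = 2 * n - 1 := by
      have : (1:ℕ) ≤ 2 * n := by omega
      push_cast [this]
      ring
    rw [e1, e2]
    have s1 : Real.sin (2 * (n:ℝ) * θ) = 0 := by
      rw [hθ, show 2 * (n:ℝ) * (Real.pi / n) = 2 * Real.pi by field_simp]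
      exact Real.sin_two_pi
    have s2 : Real.sin ((2 * (n:ℝ) - 1) * θ) = -Real.sin θ := by
      rw [hθ, show (2 * (n:ℝ) - 1) * (Real.pi / n) = 2 * Real.pi - Real.pi / n by
        field_simp]
      rw [Real.sin_sub, Real.sin_two_pi, Real.cos_two_pi]
      ring
    rw [s1, s2]
    simp [neg_div, div_self hs]
  exact Subtype.ext (by rw [Matrix.SpecialLinearGroup.coe_pow]; exact key)

end PowerFormula

section PingPong

/-- Nonzero vectors in the plane. -/
def PVec : Type := {v : Fin 2 → ℝ // v ≠ 0}

noncomputable instance : MulAction SL2R PVec where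
  smul g v := ⟨g.1.mulVec v.1, by
    intro h
    apply v.2
    have : (g⁻¹.1 * g.1).mulVec v.1 = 0 := by
      rw [← Matrix.mulVec_mulVec, h, Matrix.mulVec_zero]
    rwa [← Matrix.SpecialLinearGroup.coe_mul, inv_mul_cancel,
      Matrix.SpecialLinearGroup.coe_one, Matrix.one_mulVec] at this⟩
  one_smul v := Subtype.ext (by
    show (1 : SL2R).1.mulVec v.1 = v.1
    rw [Matrix.SpecialLinearGroup.coe_one, Matrix.one_mulVec])
  mul_smul g h v := Subtype.ext (by
    show (g * h).1.mulVec v.1 = g.1.mulVec (h.1.mulVec v.1)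
    rw [Matrix.SpecialLinearGroup.coe_mul, ← Matrix.mulVec_mulVec])

lemma smul_fst (g : SL2R) (v : PVec) : (g • v).1 = g.1.mulVec v.1 := rfl

lemma A_smul (v : PVec) : ((AmatR 2) • v).1 = ![v.1 0 + 2 * v.1 1, v.1 1] := by
  rw [smul_fst]; funext i; fin_cases i <;>
    simp [AmatR, Matrix.mulVec, dotProduct, Fin.sum_univ_succ]

lemma B_smul (v : PVec) : ((BmatR 2) • v).1 = ![v.1 0, 2 * v.1 0 + v.1 1] := by
  rw [smul_fst]; funext i; fin_cases i <;>
    simp [BmatR, Matrix.mulVec, dotProduct, Fin.sum_univ_succ]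

lemma Ainv_smul (v : PVec) : ((AmatR 2)⁻¹ • v).1 = ![v.1 0 - 2 * v.1 1, v.1 1] := by
  rw [smul_fst, Matrix.SpecialLinearGroup.coe_inv]
  funext i; fin_cases i <;>
    (simp [AmatR, Matrix.adjugate_fin_two, Matrix.mulVec, dotProduct,
      Fin.sum_univ_succ]; try ring)

lemma Binv_smul (v : PVec) : ((BmatR 2)⁻¹ • v).1 = ![v.1 0, v.1 1 - 2 * v.1 0] := by
  rw [smul_fst, Matrix.SpecialLinearGroup.coe_inv]
  funext i; fin_cases i <;>
    (simp [BmatR, Matrix.adjugate_fin_two, Matrix.mulVec, dotProduct,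
      Fin.sum_univ_succ]; try ring)

lemma pvec_pos (v : PVec) : 0 < v.1 0 ^ 2 + v.1 1 ^ 2 := by
  rcases lt_or_eq_of_le (by positivity : (0:ℝ) ≤ v.1 0 ^ 2 + v.1 1 ^ 2) with h | h
  · exact h
  · exfalso
    apply v.2
    have h0 : v.1 0 = 0 := by nlinarith [sq_nonneg (v.1 0), sq_nonneg (v.1 1)]
    have h1 : v.1 1 = 0 := by nlinarith [sq_nonneg (v.1 0), sq_nonneg (v.1 1)]
    funext i; fin_cases i <;> simpa

/-- Ping-pong sets `X` for Sanov's theorem (in homogeneous coordinates). -/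
def XS : Bool → Set PVec := fun b =>
  if b then {v | v.1 1 ^ 2 ≤ v.1 0 * v.1 1} else {v | v.1 0 ^ 2 < v.1 0 * v.1 1}

/-- Ping-pong sets `Y` for Sanov's theorem (in homogeneous coordinates). -/
def YS : Bool → Set PVec := fun b =>
  if b then {v | v.1 0 * v.1 1 < -(v.1 1 ^ 2)} else {v | v.1 0 * v.1 1 ≤ -(v.1 0 ^ 2)}

/-- Sanov's theorem: `A₂` and `B₂` generate a free group of rank 2. -/
lemma sanov :
    Function.Injective (FreeGroup.lift fun b : Bool => if b then AmatR 2 else BmatR 2) := by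
  apply FreeGroup.injective_lift_of_ping_pong _ XS YS
  · intro b
    cases b
    · exact ⟨⟨![1, 2], by intro h; simpa using congrFun h 0⟩, by
        show ((![1, 2] : Fin 2 → ℝ) 0) ^ 2 < (![1, 2] : Fin 2 → ℝ) 0 * (![1, 2] : Fin 2 → ℝ) 1
        norm_num⟩
    · exact ⟨⟨![1, 0], by intro h; simpa using congrFun h 0⟩, by
        show ((![1, 0] : Fin 2 → ℝ) 1) ^ 2 ≤ (![1, 0] : Fin 2 → ℝ) 0 * (![1, 0] : Fin 2 → ℝ) 1
        norm_num⟩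
  · intro i j hij
    simp only [Function.onFun, Set.disjoint_left]
    intro v hv hv'
    rcases Bool.eq_false_or_eq_true i with rfl | rfl <;>
      rcases Bool.eq_false_or_eq_true j with rfl | rfl <;> try exact hij rfl
    all_goals
      simp only [XS, if_true, if_false, Bool.false_eq_true, Set.mem_setOf_eq] at hv hv'
      nlinarith [sq_nonneg (v.1 0 - v.1 1)]
  · intro i j hij
    simp only [Function.onFun, Set.disjoint_left]
    intro v hv hv'
    rcases Bool.eq_false_or_eq_true i with rfl | rfl <;>
      rcases Bool.eq_false_or_eq_true j with rfl | rfl <;> try exact hij rfl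
    all_goals
      simp only [YS, if_true, if_false, Bool.false_eq_true, Set.mem_setOf_eq] at hv hv'
      nlinarith [sq_nonneg (v.1 0 + v.1 1)]
  · intro i j
    rw [Set.disjoint_left]
    intro v hv hv'
    rcases Bool.eq_false_or_eq_true i with rfl | rfl <;>
      rcases Bool.eq_false_or_eq_true j with rfl | rfl <;>
      simp only [XS, YS, if_true, if_false, Bool.false_eq_true, Set.mem_setOf_eq] at hv hv' <;>
      nlinarith [pvec_pos v, sq_nonneg (v.1 0 + v.1 1), sq_nonneg (v.1 0 - v.1 1)]
  · intro b x hx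
    obtain ⟨v, hv, rfl⟩ := hx
    simp only [Set.mem_compl_iff] at hv
    cases b
    · simp only [YS, if_false, Bool.false_eq_true, Set.mem_setOf_eq, not_le] at hv
      simp only [XS, if_false, Bool.false_eq_true, Set.mem_setOf_eq, reduceIte]
      rw [B_smul v]
      simp only [Matrix.cons_val_zero, Matrix.cons_val_one, Matrix.head_cons]
      nlinarith
    · simp only [YS, if_true, Set.mem_setOf_eq, not_lt] at hv
      simp only [XS, if_true, Set.mem_setOf_eq, reduceIte]
      rw [A_smul v]
      simp only [Matrix.cons_val_zero, Matrix.cons_val_one, Matrix.head_cons]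
      nlinarith
  · intro b x hx
    obtain ⟨v, hv, rfl⟩ := hx
    simp only [Set.mem_compl_iff] at hv
    cases b
    · simp only [XS, if_false, Bool.false_eq_true, Set.mem_setOf_eq, not_lt] at hv
      simp only [YS, if_false, Bool.false_eq_true, Set.mem_setOf_eq, Pi.inv_apply, reduceIte]
      rw [Binv_smul v]
      simp only [Matrix.cons_val_zero, Matrix.cons_val_one, Matrix.head_cons]
      nlinarith
    · simp only [XS, if_true, Set.mem_setOf_eq, not_le] at hv
      simp only [YS, if_true, Set.mem_setOf_eq, Pi.inv_apply, reduceIte]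
      rw [Ainv_smul v]
      simp only [Matrix.cons_val_zero, Matrix.cons_val_one, Matrix.head_cons]
      nlinarith

end PingPong

lemma free_pow_ne_one (m : ℕ) (hm : m ≠ 0) : (FreeGroup.of true) ^ m ≠ (1 : FreeGroup Bool) := by
  intro h
  have := congrArg (FreeGroup.lift fun _ : Bool => Multiplicative.ofAdd (1 : ℤ)) h
  simp only [map_pow, FreeGroup.lift_apply_of, map_one] at this
  have h2 : (m : ℤ) = 0 := by
    have := congrArg Multiplicative.toAdd this
    simpa [toAdd_pow] using this
  exact hm (by exact_mod_cast h2)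

/-- With `λₙ = 2cos(π/n) - 1`, the matrix `C_{λₙ}` has trace `2cos(π/n)`
and `(C_{λₙ})^{2n} = I`; in particular `⟨C_{λₙ}, B₂⟩` has a relator consisting of a single
syllable, while `C₁ = A₂` and `⟨A₂, B₂⟩` is free of rank 2 (Sanov). -/
theorem stmt_12 :
    (∀ n : ℕ, 2 ≤ n →
      Matrix.trace (CmatR (2 * Real.cos (Real.pi / n) - 1)).1 = 2 * Real.cos (Real.pi / n) ∧
      (CmatR (2 * Real.cos (Real.pi / n) - 1)) ^ (2 * n) = 1 ∧
      ((FreeGroup.of true) ^ (2 * n) ≠ (1 : FreeGroup Bool) ∧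
        FreeGroup.lift
          (fun b => if b then CmatR (2 * Real.cos (Real.pi / n) - 1) else BmatR 2)
          ((FreeGroup.of true) ^ (2 * n)) = 1)) ∧
    CmatR 1 = AmatR 2 ∧
    Function.Injective (FreeGroup.lift fun b : Bool => if b then AmatR 2 else BmatR 2) := by
  refine ⟨fun n hn => ⟨?_, C_pow n hn, free_pow_ne_one (2 * n) (by omega), ?_⟩, ?_, sanov⟩
  · simp [CmatR, Matrix.trace_fin_two_of]
    try ring
  · rw [map_pow, FreeGroup.lift_apply_of, if_pos rfl]
    exact C_pow n hn
  · apply Subtype.ext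
    show (!![1, 2; (1 - 1) / 2, 1] : Matrix (Fin 2) (Fin 2) ℝ) = !![1, 2; 0, 1]
    norm_num
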